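/- Let A be a commutative ring and M a k×n matrix over A. For a k-tuple (e_1, …, e_k) of elements of [n], let Δ(e_1,…,e_k) denote the determinant of the k×k matrix whose i-th column is column e_i of M. Then for all tuples (c_1,…,c_k), (d_1,…,d_k) ∈ [n]^k and every 1 ≤ j ≤ k: Δ(c_1,…,c_k)·Δ(d_1,…,d_k) = Σ_{1 ≤ i_1 < ⋯ < i_{k−j} ≤ k} Δ(c_1,…,c_j, d_{i_1},…,d_{i_{k−j}})·Δ(d'), where d' is the k-tuple obtained from (d_1,…,d_k) by replacing the entries in positions i_1,…,i_{k−j} by c_{j+1},…,c_k (in this order). -/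

import Mathlib

open scoped BigOperators
set_option linter.unusedSectionVars false
set_option linter.unusedVariables false

namespace Positroid

/-- `colDet M e` is `Δ(e_1, …, e_k)`: the determinant of the `k × k` matrix whose `i`-th
column is column `e_i` of `M`. -/
def colDet {A : Type*} [CommRing A] {k n : ℕ} (M : Matrix (Fin k) (Fin n) A)
    (e : Fin k → Fin n) : A :=
  (Matrix.of fun i p : Fin k => M i (e p)).det

/-- The tuple `(c_1, …, c_j, d_{i_1}, …, d_{i_{k-j}})`, where `i_1 < ⋯ < i_{k-j}` are the
elements of `T`. -/
def selTuple (k j : ℕ) {n : ℕ} (c d : Fin k → Fin n) (T : Finset (Fin k))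
    (hT : T.card = k - j) : Fin k → Fin n :=
  fun p =>
    if h : (p : ℕ) < j then c p
    else d (T.orderIsoOfFin hT ⟨(p : ℕ) - j, by have := p.isLt; omega⟩)

/-- The tuple obtained from `(d_1, …, d_k)` by replacing the entries in positions
`i_1 < ⋯ < i_{k-j}` (the elements of `T`) by `c_{j+1}, …, c_k`, in this order. -/
def replTuple (k j : ℕ) (hj : j ≤ k) {n : ℕ} (c d : Fin k → Fin n) (T : Finset (Fin k))
    (hT : T.card = k - j) : Fin k → Fin n :=
  fun p =>
    if h : p ∈ T then
      c ⟨j + (((T.orderIsoOfFin hT).symm ⟨p, h⟩ : Fin (k - j)) : ℕ),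
        by have := ((T.orderIsoOfFin hT).symm ⟨p, h⟩).isLt; omega⟩
    else d p

section Aux
variable {A : Type*} [CommRing A] {k n : ℕ}

/-- The matrix whose `p`-th column is column `e p` of `M`. -/
def colMat (M : Matrix (Fin k) (Fin n) A) (e : Fin k → Fin n) : Matrix (Fin k) (Fin k) A :=
  Matrix.of fun i p : Fin k => M i (e p)

lemma colDet_eq (M : Matrix (Fin k) (Fin n) A) (e : Fin k → Fin n) :
    colDet M e = (colMat M e).det := rfl

lemma colMat_update (M : Matrix (Fin k) (Fin n) A) (e : Fin k → Fin n) (q : Fin k) (x : Fin n) :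
    colMat M (Function.update e q x) = (colMat M e).updateCol q (fun r => M r x) := by
  ext r p
  by_cases h : p = q <;>
    simp [colMat, Matrix.updateCol_apply, Function.update_apply, h]

/-- Sign-free single-column exchange identity, via Cramer's rule. -/
lemma det_mul_det_exchange (E F : Matrix (Fin k) (Fin k) A) (q : Fin k) :
    E.det * F.det =
      ∑ i, (E.updateCol q (fun r => F r i)).det * (F.updateCol i (fun r => E r q)).det := by
  classical
  let L : (Fin k → A) →ₗ[A] A :=
    { toFun := fun v => (E.updateCol q v).det
      map_add' := fun u v => E.det_updateCol_add q u v
      map_smul' := fun s v => by simpa using E.det_updateCol_smul q s v }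
  set b : Fin k → A := fun r => E r q with hb
  have h1 : ∀ i, (F.updateCol i b).det = F.cramer b i := by
    intro i; rw [Matrix.cramer_apply]
  calc E.det * F.det
      = F.det • L b := by
        simp only [L, LinearMap.coe_mk, AddHom.coe_mk, smul_eq_mul]
        rw [show E.updateCol q b = E from Matrix.updateCol_eq_self E q]
        ring
    _ = L (F.det • b) := (map_smul L _ _).symm
    _ = L (F.mulVec (F.cramer b)) := by rw [Matrix.mulVec_cramer]
    _ = L (∑ i, F.cramer b i • fun r => F r i) := by
        congr 1
        funext r
        simp [Matrix.mulVec, dotProduct, Finset.sum_apply, mul_comm]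
    _ = ∑ i, F.cramer b i • L (fun r => F r i) := by rw [map_sum]; simp
    _ = ∑ i, (E.updateCol q (fun r => F r i)).det * (F.updateCol i b).det := by
        refine Finset.sum_congr rfl fun i _ => ?_
        rw [h1 i]
        simp [L, smul_eq_mul, mul_comm]

lemma colDet_exchange (M : Matrix (Fin k) (Fin n) A) (e f : Fin k → Fin n) (q : Fin k) :
    colDet M e * colDet M f =
      ∑ i, colDet M (Function.update e q (f i)) * colDet M (Function.update f i (e q)) := by
  simp only [colDet_eq, colMat_update]
  exact det_mul_det_exchange (colMat M e) (colMat M f) q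

lemma colDet_comp_perm (M : Matrix (Fin k) (Fin n) A) (e : Fin k → Fin n)
    (σ : Equiv.Perm (Fin k)) :
    colDet M (e ∘ σ) = ((Equiv.Perm.sign σ : ℤ) : A) * colDet M e := by
  have h : colMat M (e ∘ σ) = (colMat M e).submatrix id σ := rfl
  rw [colDet_eq, h, Matrix.det_permute' σ, colDet_eq]


/-- `(c_1,…,c_j,d_{φ 0},…,d_{φ (t-1)})` for an arbitrary function `φ`. -/
def selF (j t : ℕ) (ht : j + t = k) (c d : Fin k → Fin n) (φ : Fin t → Fin k) :
    Fin k → Fin n :=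
  fun p => if h : (p : ℕ) < j then c p else d (φ ⟨(p : ℕ) - j, by have := p.isLt; omega⟩)

/-- `d` with the entries at positions `φ s` replaced by `c (j+s)`. -/
noncomputable def replF (j t : ℕ) (ht : j + t = k) (c d : Fin k → Fin n) (φ : Fin t → Fin k) :
    Fin k → Fin n :=
  fun p =>
    if h : ∃ s, φ s = p then
      c ⟨j + ((h.choose : Fin t) : ℕ), by have := h.choose.isLt; omega⟩
    else d p

lemma selF_lt {j t : ℕ} {ht : j + t = k} {c d : Fin k → Fin n} {φ : Fin t → Fin k}
    {p : Fin k} (h : (p : ℕ) < j) : selF j t ht c d φ p = c p := dif_pos h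

lemma selF_ge {j t : ℕ} {ht : j + t = k} {c d : Fin k → Fin n} {φ : Fin t → Fin k}
    {p : Fin k} (h : ¬ (p : ℕ) < j) :
    selF j t ht c d φ p = d (φ ⟨(p : ℕ) - j, by have := p.isLt; omega⟩) := dif_neg h

lemma replF_apply_mem {j t : ℕ} {ht : j + t = k} {c d : Fin k → Fin n} {φ : Fin t → Fin k}
    (hφ : Function.Injective φ) {s : Fin t} {p : Fin k} (hs : φ s = p) :
    replF j t ht c d φ p = c ⟨j + (s : ℕ), by have := s.isLt; omega⟩ := by
  have h : ∃ u, φ u = p := ⟨s, hs⟩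
  have hu : h.choose = s := hφ (h.choose_spec.trans hs.symm)
  simp only [replF]
  rw [dif_pos h]
  exact congrArg c (Fin.ext (show j + (h.choose : ℕ) = j + (s : ℕ) by rw [hu]))

lemma replF_apply_not_mem {j t : ℕ} {ht : j + t = k} {c d : Fin k → Fin n} {φ : Fin t → Fin k}
    {p : Fin k} (h : ∀ s, φ s ≠ p) : replF j t ht c d φ p = d p := by
  simp only [replF]
  exact dif_neg (by push_neg; exact h)


lemma cons_injective {t : ℕ} {φ' : Fin t → Fin k} (hφ' : Function.Injective φ') {i : Fin k}
    (hi : ∀ s, φ' s ≠ i) : Function.Injective (Fin.cons i φ' : Fin (t + 1) → Fin k) := by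
  intro a b hab
  rcases Fin.eq_zero_or_eq_succ a with rfl | ⟨a', rfl⟩ <;>
    rcases Fin.eq_zero_or_eq_succ b with rfl | ⟨b', rfl⟩
  · rfl
  · rw [Fin.cons_zero, Fin.cons_succ] at hab; exact absurd hab.symm (hi b')
  · rw [Fin.cons_zero, Fin.cons_succ] at hab; exact absurd hab (hi a')
  · rw [Fin.cons_succ, Fin.cons_succ] at hab
    rw [hφ' hab]

lemma sel_cons {j t : ℕ} (ht : j + (t + 1) = k) (ht' : (j + 1) + t = k) (c d : Fin k → Fin n)
    (φ' : Fin t → Fin k) (i : Fin k) (hi : ∀ s, φ' s ≠ i) (hq : j < k) :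
    Function.update (selF (j + 1) t ht' c d φ') ⟨j, hq⟩ (replF (j + 1) t ht' c d φ' i)
      = selF j (t + 1) ht c d (Fin.cons i φ') := by
  funext p
  rcases eq_or_ne p ⟨j, hq⟩ with rfl | hp
  · rw [Function.update_self, replF_apply_not_mem hi, selF_ge (by simp)]
    congr 1
    have h0 : (⟨((⟨j, hq⟩ : Fin k) : ℕ) - j, by have := hq; omega⟩ : Fin (t + 1)) = 0 :=
      Fin.ext (by simp)
    rw [h0, Fin.cons_zero]
  · rw [Function.update_of_ne hp]
    have hpj : (p : ℕ) ≠ j := fun h => hp (Fin.ext h)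
    by_cases hlt : (p : ℕ) < j
    · rw [selF_lt (show (p : ℕ) < j + 1 by omega), selF_lt hlt]
    · have h1 : ¬ (p : ℕ) < j + 1 := by omega
      rw [selF_ge h1, selF_ge hlt]
      congr 1
      have hsucc : (⟨(p : ℕ) - j, by have := p.isLt; omega⟩ : Fin (t + 1))
          = Fin.succ ⟨(p : ℕ) - (j + 1), by have := p.isLt; omega⟩ := Fin.ext (by simp; omega)
      rw [hsucc, Fin.cons_succ]

lemma repl_cons {j t : ℕ} (ht : j + (t + 1) = k) (ht' : (j + 1) + t = k) (c d : Fin k → Fin n)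
    (φ' : Fin t → Fin k) (hφ' : Function.Injective φ') (i : Fin k) (hi : ∀ s, φ' s ≠ i)
    (hq : j < k) :
    Function.update (replF (j + 1) t ht' c d φ') i (c ⟨j, hq⟩)
      = replF j (t + 1) ht c d (Fin.cons i φ') := by
  have hci := cons_injective hφ' hi
  funext p
  rcases eq_or_ne p i with rfl | hp
  · rw [Function.update_self,
      replF_apply_mem hci (show (Fin.cons p φ' : Fin (t+1) → Fin k) 0 = p from Fin.cons_zero _ _)]
    exact congrArg c (Fin.ext (by simp))
  · rw [Function.update_of_ne hp]
    by_cases hmem : ∃ s, φ' s = p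
    · obtain ⟨s, hs⟩ := hmem
      rw [replF_apply_mem hφ' hs,
        replF_apply_mem hci
          (show (Fin.cons i φ' : Fin (t+1) → Fin k) s.succ = p by rw [Fin.cons_succ]; exact hs)]
      exact congrArg c (Fin.ext (by simp [Fin.val_succ]; omega))
    · push_neg at hmem
      rw [replF_apply_not_mem hmem, replF_apply_not_mem ?_]
      intro u
      rcases Fin.eq_zero_or_eq_succ u with rfl | ⟨u', rfl⟩
      · rw [Fin.cons_zero]; exact fun h => hp h.symm
      · rw [Fin.cons_succ]; exact hmem u'

lemma sel_swap {j t : ℕ} (ht' : (j + 1) + t = k) (c d : Fin k → Fin n)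
    (φ' : Fin t → Fin k) (hφ' : Function.Injective φ') (s₀ : Fin t) (hq : j < k)
    (hr : j + 1 + (s₀ : ℕ) < k) :
    Function.update (selF (j + 1) t ht' c d φ') ⟨j, hq⟩ (replF (j + 1) t ht' c d φ' (φ' s₀))
      = selF (j + 1) t ht' (c ∘ Equiv.swap ⟨j, hq⟩ ⟨j + 1 + (s₀ : ℕ), hr⟩) d φ' := by
  funext p
  rcases eq_or_ne p ⟨j, hq⟩ with rfl | hp
  · rw [Function.update_self, replF_apply_mem hφ' rfl, selF_lt (by simp)]
    show _ = c (Equiv.swap _ _ _)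
    rw [Equiv.swap_apply_left]
  · rw [Function.update_of_ne hp]
    by_cases hlt : (p : ℕ) < j + 1
    · rw [selF_lt hlt, selF_lt hlt]
      show c p = c (Equiv.swap _ _ _)
      rw [Equiv.swap_apply_of_ne_of_ne hp (by intro h; have := congrArg Fin.val h; simp at this; omega)]
    · rw [selF_ge hlt, selF_ge hlt]

lemma repl_swap {j t : ℕ} (ht' : (j + 1) + t = k) (c d : Fin k → Fin n)
    (φ' : Fin t → Fin k) (hφ' : Function.Injective φ') (s₀ : Fin t) (hq : j < k)
    (hr : j + 1 + (s₀ : ℕ) < k) :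
    Function.update (replF (j + 1) t ht' c d φ') (φ' s₀) (c ⟨j, hq⟩)
      = replF (j + 1) t ht' (c ∘ Equiv.swap ⟨j, hq⟩ ⟨j + 1 + (s₀ : ℕ), hr⟩) d φ' := by
  funext p
  rcases eq_or_ne p (φ' s₀) with rfl | hp
  · rw [Function.update_self, replF_apply_mem hφ' (rfl : φ' s₀ = φ' s₀)]
    show c _ = c (Equiv.swap _ _ _)
    congr 1
    have : (⟨j + 1 + (s₀ : ℕ), hr⟩ : Fin k) = ⟨(j + 1) + (s₀ : ℕ), by omega⟩ := rfl
    rw [show (⟨(j+1) + (s₀ : ℕ), by have := s₀.isLt; omega⟩ : Fin k)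
        = (⟨j + 1 + (s₀ : ℕ), hr⟩ : Fin k) from rfl, Equiv.swap_apply_right]
  · rw [Function.update_of_ne hp]
    by_cases hmem : ∃ s, φ' s = p
    · obtain ⟨s, hs⟩ := hmem
      have hss : s ≠ s₀ := by rintro rfl; exact hp hs.symm
      rw [replF_apply_mem hφ' hs, replF_apply_mem hφ' hs]
      show c _ = c (Equiv.swap _ _ _)
      rw [Equiv.swap_apply_of_ne_of_ne
        (by intro h; have := congrArg Fin.val h; simp at this; omega)
        (by intro h; have := congrArg Fin.val h; simp at this
            exact hss (Fin.ext (by omega)))]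
    · push_neg at hmem
      rw [replF_apply_not_mem hmem, replF_apply_not_mem hmem]

lemma selF_comp_perm (M : Matrix (Fin k) (Fin n) A) {j t : ℕ} (ht : j + t = k)
    (c d : Fin k → Fin n) (φ : Fin t → Fin k) (π : Equiv.Perm (Fin t)) :
    ∃ σ : Equiv.Perm (Fin k), Equiv.Perm.sign σ = Equiv.Perm.sign π ∧
      selF j t ht c d (φ ∘ π) = selF j t ht c d φ ∘ σ := by
  classical
  set em : Fin t → Fin k := fun s => ⟨j + (s : ℕ), by have := s.isLt; omega⟩ with hem
  have hem_inj : Function.Injective em := by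
    intro a b h
    have := congrArg Fin.val h
    simp only [hem] at this
    exact Fin.ext (by omega)
  letI : DecidablePred (· ∈ Set.range em) := Classical.decPred _
  refine ⟨π.extendDomain (Equiv.ofInjective em hem_inj), Equiv.Perm.sign_extendDomain _ _, ?_⟩
  funext p
  by_cases hlt : (p : ℕ) < j
  · have hnp : p ∉ Set.range em := by
      rintro ⟨s, rfl⟩
      simp only [hem] at hlt; omega
    have : π.extendDomain (Equiv.ofInjective em hem_inj) p = p :=
      Equiv.Perm.extendDomain_apply_not_subtype _ _ hnp
    simp only [Function.comp_apply, this]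
    rw [selF_lt hlt, selF_lt hlt]
  · have hp : em ⟨(p : ℕ) - j, by have := p.isLt; omega⟩ = p := Fin.ext (by simp [hem]; omega)
    set s : Fin t := ⟨(p : ℕ) - j, by have := p.isLt; omega⟩ with hs
    have him : π.extendDomain (Equiv.ofInjective em hem_inj) p = em (π s) := by
      rw [← hp]
      have := Equiv.Perm.extendDomain_apply_image (e := π) (f := Equiv.ofInjective em hem_inj) s
      simpa using this
    simp only [Function.comp_apply, him]
    rw [selF_ge hlt, selF_ge (show ¬ ((em (π s) : ℕ) < j) by simp [hem])]
    congr 1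
    exact congrArg φ (Fin.ext (by simp [hem, hs]))

lemma replF_comp_perm (M : Matrix (Fin k) (Fin n) A) {j t : ℕ} (ht : j + t = k)
    (c d : Fin k → Fin n) (φ : Fin t → Fin k) (hφ : Function.Injective φ)
    (π : Equiv.Perm (Fin t)) :
    ∃ σ : Equiv.Perm (Fin k), Equiv.Perm.sign σ = Equiv.Perm.sign π ∧
      replF j t ht c d (φ ∘ π) = replF j t ht c d φ ∘ σ := by
  classical
  letI : DecidablePred (· ∈ Set.range φ) := Classical.decPred _
  refine ⟨π⁻¹.extendDomain (Equiv.ofInjective φ hφ), by simp, ?_⟩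
  funext p
  by_cases hmem : ∃ u, φ u = p
  · obtain ⟨u, rfl⟩ := hmem
    have him : π⁻¹.extendDomain (Equiv.ofInjective φ hφ) (φ u) = φ (π⁻¹ u) := by
      have := Equiv.Perm.extendDomain_apply_image (e := π⁻¹) (f := Equiv.ofInjective φ hφ) u
      simpa using this
    simp only [Function.comp_apply, him]
    rw [replF_apply_mem hφ (rfl : φ (π⁻¹ u) = φ (π⁻¹ u)),
      replF_apply_mem (hφ.comp π.injective)
        (show (φ ∘ π) (π⁻¹ u) = φ u by simp)]
  · push_neg at hmem
    have hnotr : p ∉ Set.range φ := by rintro ⟨u, rfl⟩; exact hmem u rfl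
    have : π⁻¹.extendDomain (Equiv.ofInjective φ hφ) p = p :=
      Equiv.Perm.extendDomain_apply_not_subtype _ _ hnotr
    simp only [Function.comp_apply, this]
    rw [replF_apply_not_mem hmem,
      replF_apply_not_mem (φ := φ ∘ ⇑π) (fun s h => hmem (π s) h)]

lemma term_comp_perm (M : Matrix (Fin k) (Fin n) A) {j t : ℕ} (ht : j + t = k)
    (c d : Fin k → Fin n) (φ : Fin t → Fin k) (hφ : Function.Injective φ)
    (π : Equiv.Perm (Fin t)) :
    colDet M (selF j t ht c d (φ ∘ π)) * colDet M (replF j t ht c d (φ ∘ π))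
      = colDet M (selF j t ht c d φ) * colDet M (replF j t ht c d φ) := by
  obtain ⟨σ₁, hσ₁, h1⟩ := selF_comp_perm M ht c d φ π
  obtain ⟨σ₂, hσ₂, h2⟩ := replF_comp_perm M ht c d φ hφ π
  rw [h1, h2, colDet_comp_perm, colDet_comp_perm, hσ₁, hσ₂]
  rcases Int.units_eq_one_or (Equiv.Perm.sign π) with h | h <;> simp [h]

lemma claimB (M : Matrix (Fin k) (Fin n) A) :
    ∀ (t j : ℕ) (ht : j + t = k) (c d : Fin k → Fin n),
      (t.factorial : A) * (colDet M c * colDet M d) =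
        ∑ φ ∈ Finset.univ.filter (fun φ : Fin t → Fin k => Function.Injective φ),
          colDet M (selF j t ht c d φ) * colDet M (replF j t ht c d φ) := by
  intro t
  induction t with
  | zero =>
    intro j ht c d
    have hset : (Finset.univ.filter (fun φ : Fin 0 → Fin k => Function.Injective φ))
        = {fun x => x.elim0} := by
      ext φ
      simp only [Finset.mem_filter, Finset.mem_univ, true_and, Finset.mem_singleton]
      constructor
      · intro _; funext x; exact x.elim0
      · rintro rfl a; exact a.elim0
    rw [hset, Finset.sum_singleton, Nat.factorial_zero, Nat.cast_one, one_mul]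
    have h1 : selF j 0 ht c d (fun x => x.elim0) = c := by
      funext p; exact selF_lt (by have := p.isLt; omega)
    have h2 : replF j 0 ht c d (fun x => x.elim0) = d := by
      funext p; exact replF_apply_not_mem (fun s => s.elim0)
    rw [h1, h2]
  | succ t IH =>
    intro j ht c d
    have ht' : (j + 1) + t = k := by omega
    have hq : j < k := by omega
    have hselq : ∀ φ' : Fin t → Fin k,
        selF (j + 1) t ht' c d φ' ⟨j, hq⟩ = c ⟨j, hq⟩ := fun φ' => selF_lt (by simp)
    have hexp : ∀ φ' ∈ Finset.univ.filter (fun φ : Fin t → Fin k => Function.Injective φ),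
        colDet M (selF (j+1) t ht' c d φ') * colDet M (replF (j+1) t ht' c d φ')
          = (∑ i ∈ (Finset.image φ' Finset.univ)ᶜ,
              colDet M (Function.update (selF (j+1) t ht' c d φ') ⟨j, hq⟩
                  (replF (j+1) t ht' c d φ' i))
                * colDet M (Function.update (replF (j+1) t ht' c d φ') i (c ⟨j, hq⟩)))
            + ∑ i ∈ Finset.image φ' Finset.univ,
              colDet M (Function.update (selF (j+1) t ht' c d φ') ⟨j, hq⟩
                  (replF (j+1) t ht' c d φ' i))
                * colDet M (Function.update (replF (j+1) t ht' c d φ') i (c ⟨j, hq⟩)) := by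
      intro φ' _
      rw [colDet_exchange M _ _ ⟨j, hq⟩, hselq φ']
      exact (Finset.sum_compl_add_sum (Finset.image φ' Finset.univ) _).symm
    have hIH := IH (j + 1) ht' c d
    rw [Finset.sum_congr rfl hexp, Finset.sum_add_distrib] at hIH
    -- compute the in-range part
    have hB : ∀ φ' ∈ Finset.univ.filter (fun φ : Fin t → Fin k => Function.Injective φ),
        (∑ i ∈ Finset.image φ' Finset.univ,
              colDet M (Function.update (selF (j+1) t ht' c d φ') ⟨j, hq⟩
                  (replF (j+1) t ht' c d φ' i))
                * colDet M (Function.update (replF (j+1) t ht' c d φ') i (c ⟨j, hq⟩)))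
          = ∑ s₀ : Fin t,
              colDet M (selF (j+1) t ht'
                  (c ∘ Equiv.swap ⟨j, hq⟩ ⟨j + 1 + (s₀ : ℕ), by have := s₀.isLt; omega⟩) d φ')
                * colDet M (replF (j+1) t ht'
                  (c ∘ Equiv.swap ⟨j, hq⟩ ⟨j + 1 + (s₀ : ℕ), by have := s₀.isLt; omega⟩) d φ') := by
      intro φ' hφ'mem
      have hφ' : Function.Injective φ' := (Finset.mem_filter.mp hφ'mem).2
      rw [Finset.sum_image (fun x _ y _ h => hφ' h)]
      refine Finset.sum_congr rfl fun s₀ _ => ?_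
      rw [sel_swap ht' c d φ' hφ' s₀ hq (by have := s₀.isLt; omega),
        repl_swap ht' c d φ' hφ' s₀ hq (by have := s₀.isLt; omega)]
    have hBsum : ∑ φ' ∈ Finset.univ.filter (fun φ : Fin t → Fin k => Function.Injective φ),
        (∑ i ∈ Finset.image φ' Finset.univ,
              colDet M (Function.update (selF (j+1) t ht' c d φ') ⟨j, hq⟩
                  (replF (j+1) t ht' c d φ' i))
                * colDet M (Function.update (replF (j+1) t ht' c d φ') i (c ⟨j, hq⟩)))
        = (t : A) * ((t.factorial : A) * (- (colDet M c * colDet M d))) := by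
      rw [Finset.sum_congr rfl hB, Finset.sum_comm]
      have hswap : ∀ s₀ : Fin t,
          colDet M (c ∘ Equiv.swap (⟨j, hq⟩ : Fin k) ⟨j + 1 + (s₀ : ℕ), by have := s₀.isLt; omega⟩)
            = - colDet M c := by
        intro s₀
        rw [colDet_comp_perm, Equiv.Perm.sign_swap
          (by intro h; have := congrArg Fin.val h; simp at this; omega)]
        simp
      have hinner : ∀ s₀ : Fin t,
          (∑ φ' ∈ Finset.univ.filter (fun φ : Fin t → Fin k => Function.Injective φ),
              colDet M (selF (j+1) t ht'
                  (c ∘ Equiv.swap ⟨j, hq⟩ ⟨j + 1 + (s₀ : ℕ), by have := s₀.isLt; omega⟩) d φ')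
                * colDet M (replF (j+1) t ht'
                  (c ∘ Equiv.swap ⟨j, hq⟩ ⟨j + 1 + (s₀ : ℕ), by have := s₀.isLt; omega⟩) d φ'))
            = (t.factorial : A) * (- (colDet M c * colDet M d)) := by
        intro s₀
        rw [← IH (j + 1) ht'
          (c ∘ Equiv.swap ⟨j, hq⟩ ⟨j + 1 + (s₀ : ℕ), by have := s₀.isLt; omega⟩) d, hswap s₀]
        ring
      rw [Finset.sum_congr rfl (fun s₀ _ => hinner s₀), Finset.sum_const, Finset.card_univ,
        Fintype.card_fin, nsmul_eq_mul]
    -- the out-of-range part is exactly the `t+1` sum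
    have hAsum : ∑ φ' ∈ Finset.univ.filter (fun φ : Fin t → Fin k => Function.Injective φ),
        (∑ i ∈ (Finset.image φ' Finset.univ)ᶜ,
              colDet M (Function.update (selF (j+1) t ht' c d φ') ⟨j, hq⟩
                  (replF (j+1) t ht' c d φ' i))
                * colDet M (Function.update (replF (j+1) t ht' c d φ') i (c ⟨j, hq⟩)))
        = ∑ ψ ∈ Finset.univ.filter (fun ψ : Fin (t+1) → Fin k => Function.Injective ψ),
            colDet M (selF j (t+1) ht c d ψ) * colDet M (replF j (t+1) ht c d ψ) := by
      rw [Finset.sum_sigma']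
      refine Finset.sum_bij' (i := fun x _ => (Fin.cons x.2 x.1 : Fin (t+1) → Fin k))
        (j := fun ψ _ => ⟨Fin.tail ψ, ψ 0⟩) ?_ ?_ ?_ ?_ ?_
      · rintro ⟨φ', i⟩ hx
        rw [Finset.mem_sigma] at hx
        obtain ⟨h1, h2⟩ := hx
        have hφ' := (Finset.mem_filter.mp h1).2
        have hi : ∀ s, φ' s ≠ i := by
          intro s hs
          rw [Finset.mem_compl] at h2
          exact h2 (Finset.mem_image.mpr ⟨s, Finset.mem_univ s, hs⟩)
        exact Finset.mem_filter.mpr ⟨Finset.mem_univ _, cons_injective hφ' hi⟩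
      · intro ψ hψ
        have hinj := (Finset.mem_filter.mp hψ).2
        rw [Finset.mem_sigma]
        refine ⟨Finset.mem_filter.mpr ⟨Finset.mem_univ _,
          fun a b hab => Fin.succ_injective _ (hinj hab)⟩, ?_⟩
        rw [Finset.mem_compl]
        intro hmem
        obtain ⟨s, _, hs⟩ := Finset.mem_image.mp hmem
        exact (Fin.succ_ne_zero s) (hinj hs)
      · rintro ⟨φ', i⟩ _
        simp [Fin.tail_cons, Fin.cons_zero]
      · intro ψ _
        exact Fin.cons_self_tail ψ
      · rintro ⟨φ', i⟩ hx
        rw [Finset.mem_sigma] at hx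
        obtain ⟨h1, h2⟩ := hx
        have hφ' := (Finset.mem_filter.mp h1).2
        have hi : ∀ s, φ' s ≠ i := by
          intro s hs
          rw [Finset.mem_compl] at h2
          exact h2 (Finset.mem_image.mpr ⟨s, Finset.mem_univ s, hs⟩)
        rw [sel_cons ht ht' c d φ' i hi hq, repl_cons ht ht' c d φ' hφ' i hi hq]
    rw [← hAsum]
    rw [hBsum] at hIH
    have hfact : ((t+1).factorial : A) = (t.factorial : A) + (t : A) * (t.factorial : A) := by
      rw [Nat.factorial_succ]
      push_cast
      ring
    linear_combination hIH + (colDet M c * colDet M d) * hfact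

lemma selF_iota (j : ℕ) (ht : j + (k - j) = k) (c d : Fin k → Fin n)
    (T : Finset (Fin k)) (hT : T.card = k - j) :
    selF j (k - j) ht c d (fun s => ((T.orderIsoOfFin hT s : Fin k)))
      = selTuple k j c d T hT := rfl

lemma replF_iota (j : ℕ) (hj : j ≤ k) (ht : j + (k - j) = k) (c d : Fin k → Fin n)
    (T : Finset (Fin k)) (hT : T.card = k - j) :
    replF j (k - j) ht c d (fun s => ((T.orderIsoOfFin hT s : Fin k)))
      = replTuple k j hj c d T hT := by
  have hι : Function.Injective (fun s => ((T.orderIsoOfFin hT s : Fin k))) :=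
    fun a b h => (T.orderIsoOfFin hT).injective (Subtype.ext h)
  funext p
  by_cases hp : p ∈ T
  · have hs : (fun s => ((T.orderIsoOfFin hT s : Fin k)))
        ((T.orderIsoOfFin hT).symm ⟨p, hp⟩) = p := by simp
    rw [replF_apply_mem hι hs]
    simp only [replTuple]
    rw [dif_pos hp]
  · rw [replF_apply_not_mem (fun s h => hp (by rw [← h]; exact (T.orderIsoOfFin hT s).2))]
    simp only [replTuple]
    rw [dif_neg hp]

lemma orderIsoOfFin_congr {S T : Finset (Fin k)} {m : ℕ} (h : S = T) (hS : S.card = m)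
    (hT : T.card = m) (u : Fin m) :
    (S.orderIsoOfFin hS u : Fin k) = (T.orderIsoOfFin hT u : Fin k) := by subst h; rfl

lemma image_iota {T : Finset (Fin k)} {m : ℕ} (hT : T.card = m) (π : Equiv.Perm (Fin m)) :
    Finset.image ((fun s => ((T.orderIsoOfFin hT s : Fin k))) ∘ π) Finset.univ = T := by
  ext x
  simp only [Finset.mem_image, Function.comp_apply, Finset.mem_univ, true_and]
  constructor
  · rintro ⟨s, rfl⟩; exact (T.orderIsoOfFin hT (π s)).2
  · intro hx
    exact ⟨π⁻¹ ((T.orderIsoOfFin hT).symm ⟨x, hx⟩), by simp⟩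

/-- The permutation comparing an injection with the monotone enumeration of its image. -/
noncomputable def invPerm {m : ℕ} (φ : Fin m → Fin k) (hφ : Function.Injective φ)
    (hcard : (Finset.image φ Finset.univ).card = m) : Equiv.Perm (Fin m) :=
  Equiv.ofBijective
    (fun s => ((Finset.image φ Finset.univ).orderIsoOfFin hcard).symm
      ⟨φ s, Finset.mem_image.mpr ⟨s, Finset.mem_univ s, rfl⟩⟩)
    (Finite.injective_iff_bijective.mp (fun a b h => hφ (by
      have := congrArg
        (fun z => (((Finset.image φ Finset.univ).orderIsoOfFin hcard) z : Fin k)) h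
      simpa using this)))

lemma iota_invPerm {m : ℕ} (φ : Fin m → Fin k) (hφ : Function.Injective φ)
    (hcard : (Finset.image φ Finset.univ).card = m) :
    (fun s => (((Finset.image φ Finset.univ).orderIsoOfFin hcard s : Fin k)))
      ∘ (invPerm φ hφ hcard) = φ := by
  funext s
  simp [invPerm, Equiv.ofBijective, ← Finset.coe_orderIsoOfFin_apply]

lemma card_image_inj {m : ℕ} {φ : Fin m → Fin k} (hφ : Function.Injective φ) :
    (Finset.image φ Finset.univ).card = m := by
  rw [Finset.card_image_of_injective _ hφ, Finset.card_univ, Fintype.card_fin]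

lemma invPerm_iota {T : Finset (Fin k)} {m : ℕ} (hT : T.card = m) (π : Equiv.Perm (Fin m))
    (hinj : Function.Injective ((fun s => ((T.orderIsoOfFin hT s : Fin k))) ∘ π))
    (hcard : (Finset.image ((fun s => ((T.orderIsoOfFin hT s : Fin k))) ∘ π)
      Finset.univ).card = m) :
    invPerm ((fun s => ((T.orderIsoOfFin hT s : Fin k))) ∘ π) hinj hcard = π := by
  have himg := image_iota hT π
  refine Equiv.ext fun s => ?_
  have hinj' : Function.Injective (fun u : Fin m =>
      (((Finset.image ((fun s => ((T.orderIsoOfFin hT s : Fin k))) ∘ π)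
        Finset.univ).orderIsoOfFin hcard u : Fin k))) :=
    fun a b h => (Finset.orderIsoOfFin _ hcard).injective (Subtype.ext h)
  apply hinj'
  show (fun u => (((Finset.image _ Finset.univ).orderIsoOfFin hcard u : Fin k)))
      ((invPerm _ hinj hcard) s) = _
  rw [show (fun u => (((Finset.image ((fun s => ((T.orderIsoOfFin hT s : Fin k))) ∘ π)
      Finset.univ).orderIsoOfFin hcard u : Fin k)))
        ((invPerm ((fun s => ((T.orderIsoOfFin hT s : Fin k))) ∘ π) hinj hcard) s)
      = ((fun s => ((T.orderIsoOfFin hT s : Fin k))) ∘ π) s from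
    congrFun (iota_invPerm _ hinj hcard) s]
  exact (orderIsoOfFin_congr himg hcard hT (π s)).symm

lemma claimA (M : Matrix (Fin k) (Fin n) A) (j : ℕ) (hj : j ≤ k) (ht : j + (k - j) = k)
    (c d : Fin k → Fin n) :
    ∑ φ ∈ Finset.univ.filter (fun φ : Fin (k - j) → Fin k => Function.Injective φ),
        colDet M (selF j (k - j) ht c d φ) * colDet M (replF j (k - j) ht c d φ)
      = ((k - j).factorial : A) *
          ∑ T : {T : Finset (Fin k) // T.card = k - j},
            colDet M (selTuple k j c d T.1 T.2) * colDet M (replTuple k j hj c d T.1 T.2) := by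
  classical
  rw [Finset.mul_sum]
  have hper : ∀ T : {T : Finset (Fin k) // T.card = k - j},
      ((k - j).factorial : A) *
          (colDet M (selTuple k j c d T.1 T.2) * colDet M (replTuple k j hj c d T.1 T.2))
        = ∑ π : Equiv.Perm (Fin (k - j)),
            colDet M (selF j (k - j) ht c d ((fun s => ((T.1.orderIsoOfFin T.2 s : Fin k))) ∘ π))
              * colDet M (replF j (k - j) ht c d
                  ((fun s => ((T.1.orderIsoOfFin T.2 s : Fin k))) ∘ π)) := by
    intro T
    have hι : Function.Injective (fun s => ((T.1.orderIsoOfFin T.2 s : Fin k))) :=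
      fun a b h => (T.1.orderIsoOfFin T.2).injective (Subtype.ext h)
    rw [Finset.sum_congr rfl (fun π _ => term_comp_perm M ht c d _ hι π)]
    rw [selF_iota j ht c d T.1 T.2, replF_iota j hj ht c d T.1 T.2]
    rw [Finset.sum_const, Finset.card_univ, Fintype.card_perm, Fintype.card_fin, nsmul_eq_mul]
  rw [Finset.sum_congr rfl (fun T _ => hper T)]
  rw [← Finset.sum_product']
  refine Finset.sum_bij'
    (i := fun φ hφ => ((⟨Finset.image φ Finset.univ,
        card_image_inj (Finset.mem_filter.mp hφ).2⟩ : {T : Finset (Fin k) // T.card = k - j}),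
      invPerm φ (Finset.mem_filter.mp hφ).2 (card_image_inj (Finset.mem_filter.mp hφ).2)))
    (j := fun x _ => (fun s => ((x.1.1.orderIsoOfFin x.1.2 s : Fin k))) ∘ x.2)
    ?_ ?_ ?_ ?_ ?_
  · intro φ hφ
    exact Finset.mem_product.mpr ⟨Finset.mem_univ _, Finset.mem_univ _⟩
  · rintro ⟨⟨T, hT⟩, π⟩ _
    refine Finset.mem_filter.mpr ⟨Finset.mem_univ _, ?_⟩
    exact (fun a b h => π.injective
      ((T.orderIsoOfFin hT).injective (Subtype.ext h)))
  · intro φ hφ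
    exact iota_invPerm φ (Finset.mem_filter.mp hφ).2
      (card_image_inj (Finset.mem_filter.mp hφ).2)
  · rintro ⟨⟨T, hT⟩, π⟩ _
    have hinj : Function.Injective ((fun s => ((T.orderIsoOfFin hT s : Fin k))) ∘ π) :=
      fun a b h => π.injective ((T.orderIsoOfFin hT).injective (Subtype.ext h))
    exact Prod.ext (Subtype.ext (image_iota hT π))
      (invPerm_iota hT π hinj (card_image_inj hinj))
  · intro φ hφ
    have hinj := (Finset.mem_filter.mp hφ).2
    rw [iota_invPerm φ hinj (card_image_inj hinj)]

end Aux

lemma statement19_aux {A : Type*} [CommRing A] {k n : ℕ} (M : Matrix (Fin k) (Fin n) A)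
    (c d : Fin k → Fin n) (j : ℕ) (hjk : j ≤ k) :
    ((k - j).factorial : A) * (colDet M c * colDet M d) =
      ((k - j).factorial : A) *
        ∑ T : {T : Finset (Fin k) // T.card = k - j},
          colDet M (selTuple k j c d T.1 T.2) * colDet M (replTuple k j hjk c d T.1 T.2) := by
  have ht : j + (k - j) = k := by omega
  rw [claimB M (k - j) j ht c d, claimA M j hjk ht c d]


/-- Lemma `lem: unsigned-plucker-relation`.
For any commutative ring `A`, any `k × n` matrix `M` over `A`, any tuples
`c, d ∈ [n]^k` and any `1 ≤ j ≤ k`: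
`Δ(c)·Δ(d) = Σ_{1 ≤ i_1 < ⋯ < i_{k-j} ≤ k} Δ(c_1,…,c_j,d_{i_1},…,d_{i_{k-j}})·Δ(d')`,
where `d'` replaces the entries of `d` in positions `i_1, …, i_{k-j}` by
`c_{j+1}, …, c_k`. -/
theorem statement19 (A : Type*) [CommRing A] (k n : ℕ) (M : Matrix (Fin k) (Fin n) A)
    (c d : Fin k → Fin n) (j : ℕ) (hj1 : 1 ≤ j) (hjk : j ≤ k) :
    colDet M c * colDet M d =
      ∑ T : {T : Finset (Fin k) // T.card = k - j},
        colDet M (selTuple k j c d T.1 T.2) *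
          colDet M (replTuple k j hjk c d T.1 T.2) := by
  classical
  -- first prove it over the universal polynomial ring, where `(k-j)!` can be cancelled
  set R := MvPolynomial (Fin k × Fin n) ℤ with hR
  set U : Matrix (Fin k) (Fin n) R := Matrix.of fun i p => MvPolynomial.X (i, p) with hU
  have hfac : ((k - j).factorial : R) ≠ 0 := by
    have : (((k - j).factorial : ℕ) : R) = MvPolynomial.C (((k - j).factorial : ℕ) : ℤ) := by
      push_cast
      simp
    rw [this, Ne, MvPolynomial.C_eq_zero]
    exact_mod_cast Nat.factorial_ne_zero (k - j)
  have hkey : ∀ c d : Fin k → Fin n,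
      colDet U c * colDet U d =
        ∑ T : {T : Finset (Fin k) // T.card = k - j},
          colDet U (selTuple k j c d T.1 T.2) * colDet U (replTuple k j hjk c d T.1 T.2) :=
    fun c d => mul_left_cancel₀ hfac (statement19_aux U c d j hjk)
  -- transfer along the evaluation homomorphism
  let f : R →+* A := MvPolynomial.eval₂Hom (Int.castRingHom A) (fun q => M q.1 q.2)
  have hcol : ∀ e : Fin k → Fin n, f (colDet U e) = colDet M e := by
    intro e
    rw [colDet, colDet, RingHom.map_det]
    congr 1
    ext i p
    simp only [hU, Matrix.map_apply, Matrix.of_apply, f]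
    exact MvPolynomial.eval₂Hom_X' _ _ _
  have htrans := congrArg f (hkey c d)
  rw [map_mul, map_sum] at htrans
  simp only [map_mul, hcol] at htrans
  exact htrans



end Positroid
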